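/- Let (g, B) be a finite-dimensional orthogonal Lie algebra over ℝ, h a finite-dimensional real Lie algebra, and ψ : h → End(g), z ↦ ψ_z, a Lie algebra homomorphism such that each ψ_z is a derivation of g skew-adjoint with respect to B. Define Φ(x,y)(w) = B(ψ_w(x), y) and π*_z(α) = −α ∘ ad_z, and define on the product space g̃ = h × g × h* the bracket ⁅(z,x,α),(z',y,β)⁆ = (⁅z,z'⁆, ψ_z(y) − ψ_{z'}(x) + ⁅x,y⁆, π*_z(β) − π*_{z'}(α) + Φ(x,y)). Then this bracket satisfies the Jacobi identity, making g̃ a Lie algebra, and the symmetric bilinear form μ̃₀((z,x,α),(z',y,β)) = B(x,y) + α(z') + β(z) is nondegenerate and invariant with respect to this bracket. Hence (g̃, μ̃₀) is an orthogonal Lie algebra, the double orthogonal extension of (g,B) by h via ψ. Moreover if B has signature (p,q) then μ̃₀ has signature (p + dim h, q + dim h). -/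

import Mathlib

attribute [local instance 100] LieRing.ofAssociativeRing

/-- A bilinear form `B` on a real vector space `V` has signature `(p,q)` (i.e. `p`
minuses and `q` pluses) if `V` splits as a direct sum of a `p`-dimensional
subspace on which `B` is negative definite and a `q`-dimensional subspace on
which `B` is positive definite, the two being `B`-orthogonal. -/
def HasSignature {V : Type*} [AddCommGroup V] [Module ℝ V]
    (B : V → V → ℝ) (p q : ℕ) : Prop :=
  ∃ N P : Submodule ℝ V,
    Module.finrank ℝ N = p ∧ Module.finrank ℝ P = q ∧
    IsCompl N P ∧
    (∀ x ∈ N, ∀ y ∈ P, B x y = 0) ∧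
    (∀ x ∈ N, x ≠ 0 → B x x < 0) ∧
    (∀ x ∈ P, x ≠ 0 → 0 < B x x)

/-- The cocycle `Φ(x,y) = B(ψ_•(x), y) ∈ h*` of the double orthogonal extension. -/
noncomputable def doubleExtPhi (g h : Type*) [LieRing g] [LieAlgebra ℝ g]
    [LieRing h] [LieAlgebra ℝ h] (B : LinearMap.BilinForm ℝ g)
    (ψ : h →ₗ⁅ℝ⁆ Module.End ℝ g) (x y : g) : Module.Dual ℝ h :=
  (B.flip y) ∘ₗ ((ψ : h →ₗ[ℝ] Module.End ℝ g).flip x)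

/-- The bracket of the double orthogonal extension `g̃ = h ⋉ (g ×_Φ h*)`:
`⁅(z,x,α),(z',y,β)⁆ = (⁅z,z'⁆, ψ_z(y) − ψ_{z'}(x) + ⁅x,y⁆,
π*_z(β) − π*_{z'}(α) + Φ(x,y))`. -/
noncomputable def doubleExtBracket (g h : Type*) [LieRing g] [LieAlgebra ℝ g]
    [LieRing h] [LieAlgebra ℝ h] (B : LinearMap.BilinForm ℝ g)
    (ψ : h →ₗ⁅ℝ⁆ Module.End ℝ g)
    (X Y : h × g × Module.Dual ℝ h) : h × g × Module.Dual ℝ h :=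
  (⁅X.1, Y.1⁆,
   ψ X.1 Y.2.1 - ψ Y.1 X.2.1 + ⁅X.2.1, Y.2.1⁆,
   -(Y.2.2 ∘ₗ (LieAlgebra.ad ℝ h X.1)) + X.2.2 ∘ₗ (LieAlgebra.ad ℝ h Y.1) +
     doubleExtPhi g h B ψ X.2.1 Y.2.1)

/-- The scalar product `μ̃₀((z,x,α),(z',y,β)) = B(x,y) + α(z') + β(z)` of the
double orthogonal extension. -/
def doubleExtForm (g h : Type*) [LieRing g] [LieAlgebra ℝ g]
    [LieRing h] [LieAlgebra ℝ h] (B : LinearMap.BilinForm ℝ g)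
    (X Y : h × g × Module.Dual ℝ h) : ℝ :=
  B X.2.1 Y.2.1 + X.2.2 Y.1 + Y.2.2 X.1

/-- Jacobi identity in the `⁅⁅·,·⁆,·⁆` form. -/
theorem doubleExt.jac3 {L : Type*} [LieRing L] (a b c : L) :
    ⁅⁅a,b⁆,c⁆ + ⁅⁅b,c⁆,a⁆ + ⁅⁅c,a⁆,b⁆ = 0 := by
  have H := lie_jacobi c a b
  rw [← lie_skew ⁅a,b⁆ c, ← lie_skew ⁅b,c⁆ a, ← lie_skew ⁅c,a⁆ b, ← neg_add, ← neg_add,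
    neg_eq_zero, ← H]

/-- The cyclic sum `B(D⁅x,y⁆,z) + B(D⁅y,z⁆,x) + B(D⁅z,x⁆,y)` vanishes for a
skew-symmetric derivation `D`. -/
theorem doubleExt.cycT {g : Type*} [LieRing g] [LieAlgebra ℝ g]
    (B : LinearMap.BilinForm ℝ g)
    (hsymm : ∀ x y : g, B x y = B y x)
    (hinv : ∀ x y z : g, B ⁅x, y⁆ z + B y ⁅x, z⁆ = 0)
    (D : Module.End ℝ g)
    (hd : ∀ x y : g, D ⁅x, y⁆ = ⁅D x, y⁆ + ⁅x, D y⁆)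
    (hs : ∀ x y : g, B (D x) y = -B x (D y)) (x y z : g) :
    B (D ⁅x,y⁆) z + B (D ⁅y,z⁆) x + B (D ⁅z,x⁆) y = 0 := by
  have hcyc : ∀ u v t : g, B ⁅u,v⁆ t = B ⁅t,u⁆ v := by
    intro u v t
    have h1 := hinv u v t
    have h2 : B v ⁅u,t⁆ = -B v ⁅t,u⁆ := by rw [← lie_skew t u, map_neg, neg_neg]
    have h3 := hsymm v ⁅t,u⁆
    linarith
  have e1 : B (D ⁅x,y⁆) z = B ⁅y,z⁆ (D x) + B ⁅z,x⁆ (D y) := by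
    rw [hd, map_add, LinearMap.add_apply, hcyc (D x) y z, hcyc z (D x) y, hcyc x (D y) z]
  have e2 : B (D ⁅y,z⁆) x = B ⁅z,x⁆ (D y) + B ⁅x,y⁆ (D z) := by
    rw [hd, map_add, LinearMap.add_apply, hcyc (D y) z x, hcyc x (D y) z, hcyc y (D z) x]
  have e3 : B (D ⁅z,x⁆) y = B ⁅x,y⁆ (D z) + B ⁅y,z⁆ (D x) := by
    rw [hd, map_add, LinearMap.add_apply, hcyc (D z) x y, hcyc y (D z) x, hcyc z (D x) y]
  have f1 := hsymm ⁅y,z⁆ (D x); have f1' := hs x ⁅y,z⁆; have f1'' := hsymm x (D ⁅y,z⁆)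
  have f2 := hsymm ⁅z,x⁆ (D y); have f2' := hs y ⁅z,x⁆; have f2'' := hsymm y (D ⁅z,x⁆)
  have f3 := hsymm ⁅x,y⁆ (D z); have f3' := hs z ⁅x,y⁆; have f3'' := hsymm z (D ⁅x,y⁆)
  linarith

set_option maxHeartbeats 1000000 in
/-- **Medina–Revoy double orthogonal extension.** Given an orthogonal Lie algebra
`(g,B)`, a Lie algebra `h`, and a homomorphism `ψ : h → End(g)` by skew-adjoint
derivations, the bracket on `g̃ = h × g × h*` satisfies the Jacobi identity and
the form `μ̃₀` is symmetric, nondegenerate, and invariant; moreover if `B` has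
signature `(p,q)` then `μ̃₀` has signature `(p + dim h, q + dim h)`. -/
theorem double_orthogonal_extension
    (g : Type*) [LieRing g] [LieAlgebra ℝ g] [FiniteDimensional ℝ g]
    (h : Type*) [LieRing h] [LieAlgebra ℝ h] [FiniteDimensional ℝ h]
    (B : LinearMap.BilinForm ℝ g) (hB : B.Nondegenerate)
    (hsymm : ∀ x y : g, B x y = B y x)
    (hinv : ∀ x y z : g, B ⁅x, y⁆ z + B y ⁅x, z⁆ = 0)
    (ψ : h →ₗ⁅ℝ⁆ Module.End ℝ g)
    (hder : ∀ z : h, ∀ x y : g, ψ z ⁅x, y⁆ = ⁅ψ z x, y⁆ + ⁅x, ψ z y⁆)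
    (hskew : ∀ z : h, ∀ x y : g, B (ψ z x) y = -B x (ψ z y)) :
    (∀ X Y Z : h × g × Module.Dual ℝ h,
        doubleExtBracket g h B ψ (doubleExtBracket g h B ψ X Y) Z +
          doubleExtBracket g h B ψ (doubleExtBracket g h B ψ Y Z) X +
          doubleExtBracket g h B ψ (doubleExtBracket g h B ψ Z X) Y = 0) ∧
    (∀ X Y : h × g × Module.Dual ℝ h,
        doubleExtForm g h B X Y = doubleExtForm g h B Y X) ∧
    (∀ X : h × g × Module.Dual ℝ h,
        (∀ Y, doubleExtForm g h B X Y = 0) → X = 0) ∧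
    (∀ X Y Z : h × g × Module.Dual ℝ h,
        doubleExtForm g h B (doubleExtBracket g h B ψ X Y) Z +
          doubleExtForm g h B Y (doubleExtBracket g h B ψ X Z) = 0) ∧
    (∀ p q : ℕ, HasSignature (fun x y : g => B x y) p q →
        HasSignature (doubleExtForm g h B)
          (p + Module.finrank ℝ h) (q + Module.finrank ℝ h)) := by
  have hflip : ∀ u v : g, B.flip u v = B v u := fun _ _ => rfl
  refine ⟨?_, ?_, ?_, ?_, ?_⟩
  · -- Jacobi identity
    rintro ⟨a, x, α⟩ ⟨b, y, β⟩ ⟨c, z, γ⟩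
    refine Prod.ext ?_ (Prod.ext ?_ ?_)
    · exact doubleExt.jac3 a b c
    · show (ψ ⁅a,b⁆ z - ψ c (ψ a y - ψ b x + ⁅x,y⁆) + ⁅ψ a y - ψ b x + ⁅x,y⁆, z⁆)
        + (ψ ⁅b,c⁆ x - ψ a (ψ b z - ψ c y + ⁅y,z⁆) + ⁅ψ b z - ψ c y + ⁅y,z⁆, x⁆)
        + (ψ ⁅c,a⁆ y - ψ b (ψ c x - ψ a z + ⁅z,x⁆) + ⁅ψ c x - ψ a z + ⁅z,x⁆, y⁆) = (0 : g)
      have j := doubleExt.jac3 x y z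
      simp only [LieHom.map_lie, Ring.lie_def, LinearMap.sub_apply, Module.End.mul_apply,
        map_sub, map_add, hder, sub_lie, add_lie]
      rw [← lie_skew x (ψ c y), ← lie_skew y (ψ a z), ← lie_skew z (ψ b x)]
      rw [show (0:g) = ⁅⁅x,y⁆,z⁆ + ⁅⁅y,z⁆,x⁆ + ⁅⁅z,x⁆,y⁆ from j.symm]
      abel
    · show _ = (0 : Module.Dual ℝ h)
      ext w
      simp only [doubleExtBracket, doubleExtPhi, LinearMap.add_apply, LinearMap.neg_apply,
        LinearMap.comp_apply, LieAlgebra.ad_apply, LinearMap.flip_apply,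
        LieHom.coe_toLinearMap, LieHom.map_lie, Ring.lie_def, LinearMap.sub_apply,
        Module.End.mul_apply, map_sub, map_add, LinearMap.zero_apply,
        Prod.mk_add_mk, Prod.snd_add, Prod.fst_add, hflip]
      have hT := doubleExt.cycT B hsymm hinv (ψ w) (hder w) (hskew w) x y z
      have a1 := hskew c (ψ w x) y; have a2 := hskew w (ψ c y) x
      have a3 := hsymm (ψ w x) (ψ c y)
      have b1 := hskew a (ψ w y) z; have b2 := hskew w (ψ a z) y
      have b3 := hsymm (ψ w y) (ψ a z)
      have c1 := hskew b (ψ w z) x; have c2 := hskew w (ψ b x) z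
      have c3 := hsymm (ψ w z) (ψ b x)
      linarith
  · -- symmetry
    rintro ⟨a, x, α⟩ ⟨b, y, β⟩
    simp only [doubleExtForm]
    rw [hsymm]
    ring
  · -- nondegeneracy
    rintro ⟨a, x, α⟩ hX
    have hx : x = 0 := by
      apply hB.1
      intro y
      have := hX (0, y, 0)
      simpa [doubleExtForm] using this
    have hα : α = 0 := by
      ext z'
      have := hX (z', 0, 0)
      simpa [doubleExtForm] using this
    have ha : a = 0 := by
      rw [← Module.forall_dual_apply_eq_zero_iff ℝ a]
      intro φ
      have := hX (0, 0, φ)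
      simpa [doubleExtForm] using this
    simp [hx, hα, ha]

  · -- invariance
    rintro ⟨a, x, α⟩ ⟨b, y, β⟩ ⟨c, z, γ⟩
    simp only [doubleExtForm, doubleExtBracket, doubleExtPhi, LinearMap.add_apply,
      LinearMap.neg_apply, LinearMap.comp_apply, LieAlgebra.ad_apply, LinearMap.flip_apply,
      LieHom.coe_toLinearMap, map_sub, map_add, LinearMap.sub_apply, hflip]
    have h1 := hinv x y z
    have h2 := hskew a y z
    have h3 := hsymm y (ψ a z)
    have h4 := hsymm (ψ a y) z
    have h5 := hsymm y (ψ c x)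
    have h6 := hsymm (ψ b x) z
    have h7 : α ⁅c, b⁆ = -α ⁅b, c⁆ := by rw [← lie_skew b c, map_neg, neg_neg]
    linarith
  · -- signature
    rintro p q ⟨N, P, hNr, hPr, hNP, horth, hneg, hpos⟩
    classical
    set V := h × g × Module.Dual ℝ h with hV
    let b : Module.Basis (Fin (Module.finrank ℝ h)) ℝ h := Module.finBasis ℝ h
    let e : h ≃ₗ[ℝ] Module.Dual ℝ h := b.toDualEquiv
    have he : ∀ u : h, e u = b.toDual u := fun u => rfl
    have hform : ∀ u v : h, b.toDual u v = ∑ i, b.repr v i * b.repr u i := by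
      intro u v
      conv_lhs => rw [← b.sum_repr v]
      rw [map_sum]
      simp [Module.Basis.toDual_apply_left, smul_eq_mul]
    have hesymm : ∀ u v : h, e u v = e v u := by
      intro u v
      simp only [he, hform]
      exact Finset.sum_congr rfl fun i _ => mul_comm _ _
    have henn : ∀ u : h, 0 ≤ e u u := by
      intro u
      rw [he, hform]
      exact Finset.sum_nonneg fun i _ => mul_self_nonneg _
    have hepos : ∀ u : h, u ≠ 0 → 0 < e u u := by
      intro u hu
      rw [he, hform]
      have : b.repr u ≠ 0 := fun hh => hu (by simpa using congrArg b.repr.symm hh)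
      obtain ⟨i, hi⟩ : ∃ i, b.repr u i ≠ 0 := by
        by_contra hc
        push_neg at hc
        exact this (Finsupp.ext hc)
      exact Finset.sum_pos' (fun j _ => mul_self_nonneg _)
        ⟨i, Finset.mem_univ i, mul_self_pos.mpr hi⟩
    -- the embedding maps
    let F : (c : ℝ) → (S : Submodule ℝ g) → (h × S) →ₗ[ℝ] V := fun c S =>
      LinearMap.prod (LinearMap.fst ℝ h S)
        (LinearMap.prod (S.subtype ∘ₗ LinearMap.snd ℝ h S)
          ((c • (e : h →ₗ[ℝ] Module.Dual ℝ h)) ∘ₗ LinearMap.fst ℝ h S))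
    have hFapp : ∀ (c : ℝ) (S : Submodule ℝ g) (u : h × S),
        F c S u = (u.1, (u.2 : g), c • e u.1) := fun c S u => rfl
    have hFinj : ∀ (c : ℝ) (S : Submodule ℝ g), Function.Injective (F c S) := by
      intro c S u v huv
      rw [hFapp, hFapp, Prod.ext_iff, Prod.ext_iff] at huv
      exact Prod.ext huv.1 (Subtype.ext huv.2.1)
    have hrank : ∀ (c : ℝ) (S : Submodule ℝ g),
        Module.finrank ℝ (LinearMap.range (F c S)) =
          Module.finrank ℝ S + Module.finrank ℝ h := by
      intro c S
      rw [LinearMap.finrank_range_of_inj (hFinj c S), Module.finrank_prod, add_comm]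
    refine ⟨LinearMap.range (F (-1) N), LinearMap.range (F 1 P), ?_, ?_, ⟨?_, ?_⟩, ?_, ?_, ?_⟩
    · rw [hrank, hNr]
    · rw [hrank, hPr]
    · -- disjoint
      rw [Submodule.disjoint_def]
      rintro u hu1 hu2
      obtain ⟨⟨z, n⟩, rfl⟩ := hu1
      obtain ⟨⟨w, pp⟩, heq⟩ := hu2
      simp only [hFapp, Prod.mk.injEq, one_smul, neg_one_smul] at heq
      obtain ⟨hzw, hnp, hα⟩ := heq
      have hz : z = 0 := by
        by_contra hz0
        have h1 : e w z = -(e z z) := by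
          rw [hα]; simp
        rw [hzw] at h1
        have := hepos z hz0
        linarith
      have hn : (n : g) = 0 := by
        have hmem : (n : g) ∈ N ⊓ P := ⟨n.2, by rw [← hnp]; exact pp.2⟩
        rwa [hNP.inf_eq_bot, Submodule.mem_bot] at hmem
      rw [hFapp]
      rw [hz]
      simp [hn, Prod.ext_iff]
    · -- codisjoint
      rw [codisjoint_iff, eq_top_iff]
      rintro ⟨z, x, α⟩ -
      have hx : x ∈ N ⊔ P := by rw [hNP.sup_eq_top]; trivial
      obtain ⟨n, hn, pp, hp, hnp⟩ := Submodule.mem_sup.mp hx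
      rw [Submodule.mem_sup]
      set w := e.symm α with hw
      refine ⟨F (-1) N ((2⁻¹ : ℝ) • (z - w), ⟨n, hn⟩), ⟨_, rfl⟩,
        F 1 P ((2⁻¹ : ℝ) • (z + w), ⟨pp, hp⟩), ⟨_, rfl⟩, ?_⟩
      rw [hFapp, hFapp]
      have hew : e w = α := e.apply_symm_apply α
      refine Prod.ext ?_ (Prod.ext ?_ ?_)
      · show (2⁻¹ : ℝ) • (z - w) + (2⁻¹ : ℝ) • (z + w) = z
        module
      · exact hnp
      · show (-1 : ℝ) • e ((2⁻¹ : ℝ) • (z - w)) + (1 : ℝ) • e ((2⁻¹ : ℝ) • (z + w)) = α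
        rw [← hew, map_smul, map_smul, map_sub, map_add]
        module
    · -- orthogonality
      rintro u ⟨⟨z, n⟩, rfl⟩ v ⟨⟨w, pp⟩, rfl⟩
      rw [hFapp, hFapp]
      simp only [doubleExtForm, LinearMap.smul_apply, smul_eq_mul]
      have h0 := horth n n.2 pp pp.2
      have hsw := hesymm z w
      simp only at h0 ⊢
      nlinarith [h0, hsw]
    · -- negative definite
      rintro u ⟨⟨z, n⟩, rfl⟩ hu0
      rw [hFapp]
      simp only [doubleExtForm, LinearMap.smul_apply, smul_eq_mul]
      have hnz : ¬(z = 0 ∧ (n : g) = 0) := by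
        rintro ⟨hz, hn⟩
        apply hu0
        rw [hFapp]
        rw [hz]
        simp [hn, Prod.ext_iff]
      have hBnn : B n n ≤ 0 := by
        rcases eq_or_ne (n : g) 0 with hn | hn
        · simp [hn]
        · exact le_of_lt (hneg n n.2 hn)
      rcases eq_or_ne z 0 with hz | hz
      · have hn : (n : g) ≠ 0 := fun hn => hnz ⟨hz, hn⟩
        have := hneg n n.2 hn
        simp only [hz, map_zero]
        simpa using by nlinarith [this]
      · have := hepos z hz
        nlinarith [this, hBnn]
    · -- positive definite
      rintro u ⟨⟨z, n⟩, rfl⟩ hu0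
      rw [hFapp]
      simp only [doubleExtForm, LinearMap.smul_apply, smul_eq_mul]
      have hnz : ¬(z = 0 ∧ (n : g) = 0) := by
        rintro ⟨hz, hn⟩
        apply hu0
        rw [hFapp]
        rw [hz]
        simp [hn, Prod.ext_iff]
      have hBnn : 0 ≤ B n n := by
        rcases eq_or_ne (n : g) 0 with hn | hn
        · simp [hn]
        · exact le_of_lt (hpos n n.2 hn)
      rcases eq_or_ne z 0 with hz | hz
      · have hn : (n : g) ≠ 0 := fun hn => hnz ⟨hz, hn⟩
        have := hpos n n.2 hn
        simp only [hz, map_zero]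
        simpa using by nlinarith [this]
      · have := hepos z hz
        nlinarith [this, hBnn]
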